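/- Let (Ω, F, P) be a probability space, let K ≥ 2, fix an index I* ∈ {1,…,K}, and let p_t : Ω → ℝ^K (t ∈ ℕ) be random vectors whose values are component-wise strictly positive and satisfy Σ_{i=1}^K p_{t,i} = 1. Let p* ∈ ℝ^K be component-wise strictly positive with Σ_{i=1}^K p*_i = 1. Then the following are equivalent: (1) for every i ∈ {1,…,K}, the sequence p_{t,i} 𝕄-converges to p*_i; (2) for every j ≠ I*, the sequence p_{t,j}/p_{t,I*} 𝕄-converges to p*_j/p*_{I*}. -/

import Mathlib

open MeasureTheory

/-- A real-valued random variable belongs to the class 𝕄 if all its moments of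
order `p ≥ 1` are finite. -/
def MemClassM {Ω : Type*} [MeasurableSpace Ω] (P : Measure Ω) (T : Ω → ℝ) : Prop :=
  ∀ p : ℝ, 1 ≤ p → Integrable (fun ω => |T ω| ^ p) P

/-- 𝕄-convergence of a sequence of real random variables to a constant: for every
`ε > 0` there is `T ∈ 𝕄` such that `|X_t − x| ≤ ε` pointwise for all `t ≥ T`. -/
def MConv {Ω : Type*} [MeasurableSpace Ω] (P : Measure Ω) (X : ℕ → Ω → ℝ) (x : ℝ) : Prop :=
  ∀ ε : ℝ, 0 < ε → ∃ T : Ω → ℝ, MemClassM P T ∧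
    ∀ ω, ∀ t : ℕ, T ω ≤ (t : ℝ) → |X t ω - x| ≤ ε

/-- nonneg version bundling measurability -/
def M0 {Ω : Type*} [MeasurableSpace Ω] (P : Measure Ω) (f : Ω → ℝ) : Prop :=
  (∀ ω, 0 ≤ f ω) ∧ AEStronglyMeasurable f P ∧ ∀ p : ℝ, 1 ≤ p → Integrable (fun ω => f ω ^ p) P

lemma M0_of_memClassM {Ω : Type*} [MeasurableSpace Ω] {P : Measure Ω} {T : Ω → ℝ}
    (h : MemClassM P T) : M0 P (fun ω => |T ω|) := by
  have h1 := h 1 le_rfl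
  simp only [Real.rpow_one] at h1
  refine ⟨fun ω => abs_nonneg _, h1.aestronglyMeasurable, fun q hq => ?_⟩
  simpa only [abs_abs] using h q hq

lemma memClassM_of_M0 {Ω : Type*} [MeasurableSpace Ω] {P : Measure Ω} {f : Ω → ℝ}
    (h : M0 P f) : MemClassM P f := by
  intro q hq
  have := h.2.2 q hq
  simpa only [abs_of_nonneg (h.1 _)] using this

lemma M0.add {Ω : Type*} [MeasurableSpace Ω] {P : Measure Ω} {f g : Ω → ℝ}
    (hf : M0 P f) (hg : M0 P g) : M0 P (fun ω => f ω + g ω) := by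
  refine ⟨fun ω => add_nonneg (hf.1 ω) (hg.1 ω), hf.2.1.add hg.2.1, fun q hq => ?_⟩
  have hq0 : (0:ℝ) ≤ q := le_trans zero_le_one hq
  have hmeas : AEStronglyMeasurable (fun ω => (f ω + g ω) ^ q) P :=
    (Real.continuous_rpow_const hq0).comp_aestronglyMeasurable (hf.2.1.add hg.2.1)
  refine Integrable.mono' (((hf.2.2 q hq).add (hg.2.2 q hq)).const_mul ((2:ℝ) ^ q)) hmeas ?_
  filter_upwards with ω
  have h1 : f ω + g ω ≤ 2 * max (f ω) (g ω) := by
    have := le_max_left (f ω) (g ω); have := le_max_right (f ω) (g ω); linarith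
  have hmax0 : 0 ≤ max (f ω) (g ω) := le_trans (hf.1 ω) (le_max_left _ _)
  calc ‖(f ω + g ω) ^ q‖ = (f ω + g ω) ^ q := by
        rw [Real.norm_eq_abs, abs_of_nonneg (Real.rpow_nonneg (add_nonneg (hf.1 ω) (hg.1 ω)) q)]
    _ ≤ (2 * max (f ω) (g ω)) ^ q :=
        Real.rpow_le_rpow (add_nonneg (hf.1 ω) (hg.1 ω)) h1 hq0
    _ = 2 ^ q * max (f ω) (g ω) ^ q := Real.mul_rpow (by norm_num) hmax0
    _ ≤ 2 ^ q * (f ω ^ q + g ω ^ q) := by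
        refine mul_le_mul_of_nonneg_left ?_ (Real.rpow_nonneg (by norm_num) q)
        rcases max_cases (f ω) (g ω) with ⟨h, _⟩ | ⟨h, _⟩ <;> rw [h]
        · nlinarith [Real.rpow_nonneg (hg.1 ω) q]
        · nlinarith [Real.rpow_nonneg (hf.1 ω) q]

lemma M0.zero {Ω : Type*} [MeasurableSpace Ω] {P : Measure Ω} [IsFiniteMeasure P] :
    M0 P (fun _ : Ω => (0:ℝ)) := by
  refine ⟨fun _ => le_rfl, aestronglyMeasurable_const, fun q hq => ?_⟩
  simpa using (integrable_const ((0:ℝ) ^ q) : Integrable (fun _ : Ω => (0:ℝ) ^ q) P)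

lemma M0.sum {Ω : Type*} [MeasurableSpace Ω] {P : Measure Ω} [IsFiniteMeasure P]
    {ι : Type*} (s : Finset ι) (f : ι → Ω → ℝ) (h : ∀ j ∈ s, M0 P (f j)) :
    M0 P (fun ω => ∑ j ∈ s, f j ω) := by
  classical
  induction s using Finset.induction_on with
  | empty => simpa using (M0.zero : M0 P _)
  | insert _ _ hni ih =>
    rename_i a s
    simp only [Finset.sum_insert hni]
    exact (h a (Finset.mem_insert_self a s)).add
      (ih fun j hj => h j (Finset.mem_insert_of_mem hj))

/-- combine finitely many witnesses -/
lemma combine_witness {Ω : Type*} [MeasurableSpace Ω] {P : Measure Ω} [IsFiniteMeasure P]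
    {ι : Type*} (s : Finset ι) (T : ι → Ω → ℝ) (h : ∀ j ∈ s, MemClassM P (T j)) :
    ∃ S : Ω → ℝ, MemClassM P S ∧ ∀ j ∈ s, ∀ ω, T j ω ≤ S ω := by
  refine ⟨fun ω => ∑ j ∈ s, |T j ω|, memClassM_of_M0 (M0.sum s _ fun j hj => M0_of_memClassM (h j hj)),
    fun j hj ω => ?_⟩
  exact le_trans (le_abs_self _) (Finset.single_le_sum (fun k _ => abs_nonneg (T k ω)) hj)

theorem stmt9 {Ω : Type*} [MeasurableSpace Ω] (P : Measure Ω) [IsProbabilityMeasure P]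
    (K : ℕ) (hK : 2 ≤ K) (Istar : Fin K)
    (p : ℕ → Ω → Fin K → ℝ)
    (hpos : ∀ t ω i, 0 < p t ω i) (hsum : ∀ t ω, ∑ i, p t ω i = 1)
    (pstar : Fin K → ℝ) (hpstar : ∀ i, 0 < pstar i) (hsumstar : ∑ i, pstar i = 1) :
    (∀ i : Fin K, MConv P (fun t ω => p t ω i) (pstar i)) ↔
      (∀ j : Fin K, j ≠ Istar →
        MConv P (fun t ω => p t ω j / p t ω Istar) (pstar j / pstar Istar)) := by
  classical
  have hle1 : ∀ i, pstar i ≤ 1 := by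
    intro i
    rw [← hsumstar]
    exact Finset.single_le_sum (fun k _ => (hpstar k).le) (Finset.mem_univ i)
  set b := pstar Istar with hb
  have hb0 : 0 < b := hpstar Istar
  constructor
  · intro h j hj ε hε
    set a := pstar j with ha
    have ha0 : 0 < a := hpstar j
    set δ : ℝ := min (b / 2) (ε * b ^ 2 / 4) with hδdef
    have hδ0 : 0 < δ := lt_min (by positivity) (by positivity)
    obtain ⟨T1, hT1, hT1b⟩ := h j δ hδ0
    obtain ⟨T2, hT2, hT2b⟩ := h Istar δ hδ0
    obtain ⟨S, hS, hSb⟩ := combine_witness {true, false} (fun c => if c then T1 else T2)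
      (by rintro (_|_) _ <;> simpa using (by assumption : _))
    refine ⟨S, hS, fun ω t ht => ?_⟩
    have h1 : |p t ω j - a| ≤ δ := hT1b ω t (le_trans (by simpa using hSb true (by simp) ω) ht)
    have h2 : |p t ω Istar - b| ≤ δ := hT2b ω t (le_trans (by simpa using hSb false (by simp) ω) ht)
    set x := p t ω j
    set y := p t ω Istar
    have hy0 : 0 < y := hpos t ω Istar
    have hδb : δ ≤ b / 2 := min_le_left _ _
    have hδε : δ ≤ ε * b ^ 2 / 4 := min_le_right _ _
    have hyb : b / 2 ≤ y := by
      have := abs_le.1 h2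
      linarith [this.1]
    rw [div_sub_div _ _ (ne_of_gt hy0) (ne_of_gt hb0), abs_div,
      abs_of_pos (mul_pos hy0 hb0), div_le_iff₀ (mul_pos hy0 hb0)]
    have hnum : |x * b - y * a| ≤ δ * b + δ * a := by
      rw [show x * b - y * a = (x - a) * b - (y - b) * a from by ring]
      refine (abs_sub _ _).trans ?_
      rw [abs_mul, abs_mul, abs_of_pos hb0, abs_of_pos ha0]
      exact add_le_add (mul_le_mul_of_nonneg_right h1 hb0.le)
        (mul_le_mul_of_nonneg_right h2 ha0.le)
    have hab : a ≤ 1 := hle1 j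
    have hbb : b ≤ 1 := hle1 Istar
    nlinarith [mul_le_mul_of_nonneg_left hyb (mul_pos hε hb0).le]
  · intro h i ε hε
    have hδ0 : (0:ℝ) < ε / (K + 1) := by positivity
    set δ : ℝ := ε / (K + 1) with hδdef
    have hple1 : ∀ t ω i, p t ω i ≤ 1 := by
      intro t ω i
      rw [← hsum t ω]
      exact Finset.single_le_sum (fun k _ => (hpos t ω k).le) (Finset.mem_univ i)
    have hw : ∀ j : Fin K, ∃ T : Ω → ℝ, MemClassM P T ∧
        ∀ ω, ∀ t : ℕ, T ω ≤ (t : ℝ) →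
          |p t ω j / p t ω Istar - pstar j / b| ≤ δ := by
      intro j
      by_cases hj : j = Istar
      · subst hj
        refine ⟨fun _ => 0, memClassM_of_M0 M0.zero, fun ω t _ => ?_⟩
        rw [div_self (ne_of_gt (hpos t ω j)), div_self (ne_of_gt hb0)]
        simpa using hδ0.le
      · exact h j hj δ hδ0
    choose T hTM hTb using hw
    obtain ⟨S, hSM, hSb⟩ := combine_witness Finset.univ T (fun j _ => hTM j)
    refine ⟨S, hSM, fun ω t ht => ?_⟩
    have hδj : ∀ j, |p t ω j / p t ω Istar - pstar j / b| ≤ δ :=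
      fun j => hTb j ω t (le_trans (hSb j (Finset.mem_univ j) ω) ht)
    have hy0 : 0 < p t ω Istar := hpos t ω Istar
    set y := p t ω Istar with hy
    have hSsum : ∑ j, p t ω j / y = 1 / y := by rw [← Finset.sum_div, hsum t ω]
    have hSsums : ∑ j, pstar j / b = 1 / b := by rw [← Finset.sum_div, hsumstar]
    have hs0 : (0:ℝ) < 1 / y := by positivity
    have hss0 : (0:ℝ) < 1 / b := by positivity
    have hs1 : (1:ℝ) ≤ 1 / y := by
      rw [le_div_iff₀ hy0, one_mul]; exact hple1 t ω Istar
    have hpi : p t ω i = (p t ω i / y) / (1 / y) := by field_simp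
    have hpsi : pstar i = (pstar i / b) / (1 / b) := by field_simp
    have hsd : |1 / y - 1 / b| ≤ (K : ℝ) * δ := by
      rw [← hSsum, ← hSsums, ← Finset.sum_sub_distrib]
      refine (Finset.abs_sum_le_sum_abs _ _).trans ?_
      calc ∑ j, |p t ω j / y - pstar j / b| ≤ ∑ _j : Fin K, δ :=
            Finset.sum_le_sum fun j _ => hδj j
        _ = (K : ℝ) * δ := by simp [mul_comm]
    have hAs : pstar i / b ≤ 1 / b := by
      rw [← hSsums]
      exact Finset.single_le_sum (f := fun k => pstar k / b)
        (fun k _ => div_nonneg (hpstar k).le hb0.le) (Finset.mem_univ i)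
    have hA0 : 0 ≤ pstar i / b := div_nonneg (hpstar i).le hb0.le
    have hAd : |p t ω i / y - pstar i / b| ≤ δ := hδj i
    show |p t ω i - pstar i| ≤ ε
    rw [hpi, hpsi, div_sub_div _ _ (ne_of_gt hs0) (ne_of_gt hss0), abs_div,
      abs_of_pos (mul_pos hs0 hss0), div_le_iff₀ (mul_pos hs0 hss0)]
    have h3 : |(p t ω i / y) * (1 / b) - (1 / y) * (pstar i / b)| ≤
        |p t ω i / y - pstar i / b| * (1 / b) + |1 / y - 1 / b| * (pstar i / b) := by
      rw [show (p t ω i / y) * (1 / b) - (1 / y) * (pstar i / b) =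
        (p t ω i / y - pstar i / b) * (1 / b) - (1 / y - 1 / b) * (pstar i / b) from by ring]
      refine (abs_sub _ _).trans ?_
      rw [abs_mul, abs_mul, abs_of_pos hss0, abs_of_nonneg hA0]
    have hεδ : ((K : ℝ) + 1) * δ = ε := by
      rw [hδdef]; field_simp
    nlinarith [mul_le_mul_of_nonneg_right hAd hss0.le,
      mul_le_mul hsd hAs hA0 (by positivity : (0:ℝ) ≤ (K : ℝ) * δ),
      mul_le_mul_of_nonneg_right hs1 (mul_pos hε hss0).le]
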